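/- Suppose condition (B_p) holds for some p > 1 and condition (Q_∞) holds. Then there exist constants c > 0 and C < ∞ such that, for all x ∈ ℤ≥0, all n ∈ ℤ≥0, and all r ≥ 0, P[τ_{n+1} − τ_n > r | X_{τ_n} = x] ≤ C e^{−cr}; moreover P_{x,i}[τ > r] ≤ C e^{−cr} for all x and all i ∈ S. -/

import Mathlib

open MeasureTheory Filter Topology Asymptotics
open scoped ENNReal NNReal

/-- A time-homogeneous Markov chain on a measurable state space `E`, encoded via the family
`P z` of laws (on trajectory space) of the chain started at `z`.  The field `markov` is the
time-homogeneous Markov property: conditionally on the event `{ω n = w}` intersected with any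
event `B` depending only on the first `n+1` coordinates, the shifted trajectory has law `P w`. -/
structure MChain (E : Type*) [MeasurableSpace E] where
  P : E → MeasureTheory.Measure (ℕ → E)
  isProb : ∀ z, MeasureTheory.IsProbabilityMeasure (P z)
  init : ∀ z, P z {ω | ω 0 = z} = 1
  markov : ∀ (z : E) (n : ℕ) (w : E) (A B : Set (ℕ → E)), MeasurableSet A →
    (∀ ω ω' : ℕ → E, (∀ k, k ≤ n → ω k = ω' k) → ω ∈ B → ω' ∈ B) →
    P z (B ∩ {ω | ω n = w} ∩ {ω | (fun k => ω (n + k)) ∈ A})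
      = P z (B ∩ {ω | ω n = w}) * P w A

namespace MChain

variable {E : Type*} [MeasurableSpace E]

/-- Irreducibility: every state can be reached from every state with positive probability. -/
def Irreducible (X : MChain E) : Prop := ∀ z w : E, ∃ n : ℕ, X.P z {ω | ω n = w} ≠ 0

/-- Recurrence: from every state, the chain returns to it almost surely. -/
def Recurrent (X : MChain E) : Prop := ∀ z : E, X.P z {ω | ∃ n, 1 ≤ n ∧ ω n = z} = 1

def Transient (X : MChain E) : Prop := ¬ X.Recurrent

/-- The first return time to `z` (with junk value `0`, via `sInf ∅ = 0`, if there is no return). -/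
noncomputable def returnTime (z : E) (ω : ℕ → E) : ℕ := sInf {n | 1 ≤ n ∧ ω n = z}

/-- Positive recurrence: recurrent, with finite mean return times. -/
def PositiveRecurrent (X : MChain E) : Prop :=
  X.Recurrent ∧ ∀ z : E, (∫⁻ ω, (returnTime z ω : ℝ≥0∞) ∂(X.P z)) ≠ ⊤

def NullRecurrent (X : MChain E) : Prop := X.Recurrent ∧ ¬ X.PositiveRecurrent

end MChain

section HalfStrip

variable {S : Type*} [Fintype S] [DecidableEq S] [Nonempty S]
  [MeasurableSpace S] [MeasurableSingletonClass S]

/-- `qhat X x i j` is the probability that the `S`-coordinate moves from `i` to `j` when the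
`ℕ`-coordinate is at `x`; this is `q_x(i,j) = Σ_y p(x,i,y,j)` of the paper. -/
noncomputable def qhat (X : MChain (ℕ × S)) (x : ℕ) (i j : S) : ℝ :=
  (X.P (x, i) {ω | (ω 1).2 = j}).toReal

/-- `stepMoment X k x i = μ_k(x,i) = E[(X_{n+1}-X_n)^k | X_n = x, η_n = i]`. -/
noncomputable def stepMoment (X : MChain (ℕ × S)) (k : ℕ) (x : ℕ) (i : S) : ℝ :=
  ∫ ω, (((ω 1).1 : ℝ) - (x : ℝ)) ^ k ∂(X.P (x, i))

/-- Condition (B_p): uniformly bounded conditional `p`-th moments of the jumps of the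
`ℕ`-coordinate (by the Markov property, the conditional moment given `F_n` is a function of
the current state only). -/
def CondB (X : MChain (ℕ × S)) (p : ℝ) : Prop :=
  ∃ C : ℝ≥0∞, C ≠ ⊤ ∧ ∀ (x : ℕ) (i : S),
    (∫⁻ ω, ENNReal.ofReal (|((ω 1).1 : ℝ) - (x : ℝ)| ^ p) ∂(X.P (x, i))) ≤ C

def IsStochasticMatrix (Q : S → S → ℝ) : Prop :=
  (∀ i j, 0 ≤ Q i j) ∧ ∀ i, (∑ j, Q i j) = 1

def IsIrreducibleMatrix (Q : S → S → ℝ) : Prop :=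
  ∀ i j, ∃ n : ℕ, 0 < ((Matrix.of Q) ^ n) i j

/-- Aperiodicity (for a finite irreducible stochastic matrix, eventual positivity of the
diagonal entries of the powers is equivalent to aperiodicity). -/
def IsAperiodicMatrix (Q : S → S → ℝ) : Prop :=
  ∀ i, ∃ N : ℕ, ∀ n, N ≤ n → 0 < ((Matrix.of Q) ^ n) i i

/-- `pst` is a (strictly positive) stationary distribution for `Q`. -/
def IsStationaryDist (Q : S → S → ℝ) (pst : S → ℝ) : Prop :=
  (∀ i, 0 < pst i) ∧ (∑ i, pst i) = 1 ∧ ∀ j, (∑ i, pst i * Q i j) = pst j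

/-- Condition (Q_∞): the transition matrix of the `S`-coordinate converges as `x → ∞` to an
irreducible stochastic matrix `Q`. -/
def CondQ (X : MChain (ℕ × S)) (Q : S → S → ℝ) : Prop :=
  (∀ i j, Tendsto (fun x : ℕ => qhat X x i j) atTop (nhds (Q i j))) ∧
    IsStochasticMatrix Q ∧ IsIrreducibleMatrix Q

/-- Condition (Q_∞^+): as (Q_∞), with a power-law rate of convergence. -/
def CondQplus (X : MChain (ℕ × S)) (Q : S → S → ℝ) : Prop :=
  (∃ δ₀ : ℝ, 0 < δ₀ ∧ ∀ i j,
      (fun x : ℕ => qhat X x i j - Q i j) =O[atTop] fun x : ℕ => (x : ℝ) ^ (-δ₀)) ∧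
    IsStochasticMatrix Q ∧ IsIrreducibleMatrix Q

/-- Condition (M_C): asymptotically constant drifts, `μ₁(x,i) = d_i + o(1)`. -/
def CondMC (X : MChain (ℕ × S)) (d : S → ℝ) : Prop :=
  ∀ i, Tendsto (fun x : ℕ => stepMoment X 1 x i) atTop (nhds (d i))

/-- Condition (M_L): Lamperti-type drifts, `μ₁(x,i) = c_i/x + o(1/x)`, `μ₂(x,i) = s_i² + o(1)`,
with at least one `s_i²` nonzero. -/
def CondML (X : MChain (ℕ × S)) (c s2 : S → ℝ) : Prop :=
  (∀ i, 0 ≤ s2 i) ∧ (∃ i, s2 i ≠ 0) ∧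
    (∀ i, Tendsto (fun x : ℕ => (x : ℝ) * stepMoment X 1 x i) atTop (nhds (c i))) ∧
    (∀ i, Tendsto (fun x : ℕ => stepMoment X 2 x i) atTop (nhds (s2 i)))

/-- Condition (M_L^+): Lamperti-type drifts with power-law error bounds. -/
def CondMLplus (X : MChain (ℕ × S)) (c s2 : S → ℝ) : Prop :=
  (∀ i, 0 ≤ s2 i) ∧ (∃ i, s2 i ≠ 0) ∧
    ∃ δ₁ : ℝ, 0 < δ₁ ∧ ∀ i,
      ((fun x : ℕ => stepMoment X 1 x i - c i / (x : ℝ)) =O[atTop]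
        fun x : ℕ => (x : ℝ) ^ (-1 - δ₁)) ∧
      ((fun x : ℕ => stepMoment X 2 x i - s2 i) =O[atTop] fun x : ℕ => (x : ℝ) ^ (-δ₁))

/-- Successive visit times `τ_0 < τ_1 < ⋯` of the `S`-coordinate to the distinguished state
`s0` (junk value, via `sInf ∅ = 0`, if there is no such visit). -/
noncomputable def tauSeq (s0 : S) (ω : ℕ → ℕ × S) : ℕ → ℕ
  | 0 => sInf {n | (ω n).2 = s0}
  | m + 1 => sInf {n | tauSeq s0 ω m < n ∧ (ω n).2 = s0}

/-- `τ`, the first positive time at which the `S`-coordinate visits `s0`. -/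
noncomputable def tauRet (s0 : S) (ω : ℕ → ℕ × S) : ℕ :=
  sInf {n | 1 ≤ n ∧ (ω n).2 = s0}

/-- `D_n`, the maximal displacement of the `ℕ`-coordinate during the `n`-th excursion. -/
noncomputable def Dexc (s0 : S) (n : ℕ) (ω : ℕ → ℕ × S) : ℕ :=
  Finset.sup (Finset.Icc (tauSeq s0 ω n) (tauSeq s0 ω (n + 1)))
    fun m => Nat.dist (ω m).1 (ω (tauSeq s0 ω n)).1

/-- `N(n) = max {k : τ_k ≤ n}`. -/
noncomputable def Ncount (s0 : S) (n : ℕ) (ω : ℕ → ℕ × S) : ℕ :=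
  sSup {k | tauSeq s0 ω k ≤ n}

end HalfStrip


/- ### Auxiliary development -/

section Tools
variable {E : Type*} [MeasurableSpace E] [Countable E] [MeasurableSingletonClass E]

lemma meas_det {t : ℕ} {B : Set (ℕ → E)}
    (hB : ∀ ω ω' : ℕ → E, (∀ k, k ≤ t → ω k = ω' k) → ω ∈ B → ω' ∈ B) :
    MeasurableSet B := by
  have hπ : Measurable (fun (ω : ℕ → E) (k : Fin (t+1)) => ω k) :=
    measurable_pi_lambda _ (fun k => measurable_pi_apply _)
  have hB' : B = (fun (ω : ℕ → E) (k : Fin (t+1)) => ω k) ⁻¹'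
      ((fun (ω : ℕ → E) (k : Fin (t+1)) => ω k) '' B) := by
    ext ω
    constructor
    · exact fun h => ⟨ω, h, rfl⟩
    · rintro ⟨ω', hω', h⟩
      refine hB ω' ω (fun k hk => ?_) hω'
      have := congrFun h ⟨k, by omega⟩
      simpa using this
  rw [hB']
  exact hπ (MeasurableSet.of_discrete)

omit [Countable E] [MeasurableSingletonClass E] in
lemma meas_coord (n : ℕ) {A : Set E} (hA : MeasurableSet A) :
    MeasurableSet {ω : ℕ → E | ω n ∈ A} :=
  measurable_pi_apply n hA

omit [Countable E] [MeasurableSingletonClass E] in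
lemma meas_eq (n : ℕ) (w : E) [MeasurableSingletonClass E] :
    MeasurableSet {ω : ℕ → E | ω n = w} := by
  have h : {ω : ℕ → E | ω n = w} = {ω : ℕ → E | ω n ∈ ({w} : Set E)} := by
    ext ω; simp
  rw [h]
  exact meas_coord n (measurableSet_singleton w)

omit [Countable E] [MeasurableSingletonClass E] in
lemma meas_shift (t : ℕ) {A : Set (ℕ → E)} (hA : MeasurableSet A) :
    MeasurableSet {ω : ℕ → E | (fun k => ω (t + k)) ∈ A} := by
  have h : Measurable (fun (ω : ℕ → E) (k : ℕ) => ω (t + k)) :=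
    measurable_pi_lambda _ (fun k => measurable_pi_apply _)
  exact h hA

variable (X : MChain E)

/-- plain Markov property with `B = univ`. -/
lemma MChain.markov_univ (z w : E) (t : ℕ) (A : Set (ℕ → E)) (hA : MeasurableSet A) :
    X.P z ({ω | ω t = w} ∩ {ω | (fun k => ω (t + k)) ∈ A})
      = X.P z {ω | ω t = w} * X.P w A := by
  have := X.markov z t w A Set.univ hA (fun _ _ _ h => h)
  simpa [Set.univ_inter] using this

/-- Upper bound: decompose at time `t` over the value of `ω t` in `W`. -/
lemma MChain.shift_bound (z : E) (t : ℕ) (W : Set E)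
    (B A : Set (ℕ → E)) (hA : MeasurableSet A)
    (hB : ∀ ω ω' : ℕ → E, (∀ k, k ≤ t → ω k = ω' k) → ω ∈ B → ω' ∈ B)
    (b : ℝ≥0∞) (hb : ∀ w ∈ W, X.P w A ≤ b) :
    X.P z (B ∩ {ω | ω t ∈ W} ∩ {ω | (fun k => ω (t + k)) ∈ A})
      ≤ b * X.P z (B ∩ {ω | ω t ∈ W}) := by
  have hBm : MeasurableSet B := meas_det hB
  set f : E → Set (ℕ → E) := fun w => B ∩ {ω | ω t = w} with hf
  have hWc : W.Countable := Set.to_countable W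
  have hfm : ∀ w ∈ W, MeasurableSet (f w) := fun w _ =>
    hBm.inter (meas_coord t (MeasurableSet.of_discrete (s := {w})))
  have hdisj : W.PairwiseDisjoint f := by
    intro u hu v hv huv
    rw [Function.onFun, Set.disjoint_left]
    rintro ω ⟨-, h1⟩ ⟨-, h2⟩
    exact huv ((h1 : ω t = u) ▸ (h2 : ω t = v))
  have hst : B ∩ {ω | ω t ∈ W} = ⋃ w ∈ W, f w := by
    ext ω
    simp only [Set.mem_inter_iff, Set.mem_setOf_eq, Set.mem_iUnion, hf]
    constructor
    · rintro ⟨h1, h2⟩; exact ⟨ω t, h2, h1, rfl⟩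
    · rintro ⟨w, hw, h1, h2⟩; exact ⟨h1, h2 ▸ hw⟩
  have hst2 : B ∩ {ω | ω t ∈ W} ∩ {ω | (fun k => ω (t + k)) ∈ A}
      = ⋃ w ∈ W, (f w ∩ {ω | (fun k => ω (t + k)) ∈ A}) := by
    rw [hst, Set.iUnion₂_inter]
  calc X.P z (B ∩ {ω | ω t ∈ W} ∩ {ω | (fun k => ω (t + k)) ∈ A})
      ≤ ∑' w : W, X.P z (f w ∩ {ω | (fun k => ω (t + k)) ∈ A}) := by
        rw [hst2]; exact measure_biUnion_le _ hWc _
    _ = ∑' w : W, X.P z (f w) * X.P (w : E) A := by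
        refine tsum_congr fun w => ?_
        exact X.markov z t w A B hA hB
    _ ≤ ∑' w : W, X.P z (f w) * b := by
        refine Summable.tsum_le_tsum (fun w => ?_) ENNReal.summable ENNReal.summable
        exact mul_le_mul_right (hb w w.2) _
    _ = (∑' w : W, X.P z (f w)) * b := ENNReal.tsum_mul_right
    _ = X.P z (B ∩ {ω | ω t ∈ W}) * b := by
        rw [hst, measure_biUnion hWc hdisj hfm]
    _ = b * X.P z (B ∩ {ω | ω t ∈ W}) := mul_comm _ _

/-- Lower bound: a finite disjoint one-step decomposition sits inside `A'`. -/
lemma MChain.one_step_lower (z : E) (W : Finset E) (A A' : Set (ℕ → E))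
    (hA : MeasurableSet A)
    (hsub : ∀ w ∈ W, ∀ ω : ℕ → E, ω 1 = w → (fun k => ω (1 + k)) ∈ A → ω ∈ A') :
    (∑ w ∈ W, X.P z {ω | ω 1 = w} * X.P w A) ≤ X.P z A' := by
  set g : E → Set (ℕ → E) :=
    fun w => {ω | ω 1 = w} ∩ {ω | (fun k => ω (1 + k)) ∈ A} with hg
  have hgm : ∀ w ∈ W, MeasurableSet (g w) := fun w _ =>
    (meas_coord 1 (MeasurableSet.of_discrete (s := {w}))).inter (meas_shift 1 hA)
  have hdisj : (W : Set E).PairwiseDisjoint g := by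
    intro u hu v hv huv
    rw [Function.onFun, Set.disjoint_left]
    rintro ω ⟨h1, -⟩ ⟨h2, -⟩
    exact huv ((h1 : ω 1 = u) ▸ (h2 : ω 1 = v))
  calc (∑ w ∈ W, X.P z {ω | ω 1 = w} * X.P w A)
      = ∑ w ∈ W, X.P z (g w) := by
        refine Finset.sum_congr rfl fun w _ => ?_
        rw [hg]
        have := X.markov_univ z w 1 A hA
        simp only [this]
    _ = X.P z (⋃ w ∈ W, g w) := (measure_biUnion_finset hdisj hgm).symm
    _ ≤ X.P z A' := by
        refine measure_mono ?_
        intro ω hω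
        simp only [Set.mem_iUnion] at hω
        obtain ⟨w, hw, h1, h2⟩ := hω
        exact hsub w hw ω h1 h2

/-- splitting a coordinate event into fibers. -/
lemma MChain.fiber_sum (z : E) (t : ℕ) (W : Finset E) :
    X.P z {ω | ω t ∈ W} = ∑ w ∈ W, X.P z {ω | ω t = w} := by
  have hm : ∀ w ∈ W, MeasurableSet {ω : ℕ → E | ω t = w} := fun w _ =>
    meas_coord t (MeasurableSet.of_discrete (s := {w}))
  have hdisj : (W : Set E).PairwiseDisjoint (fun w => {ω : ℕ → E | ω t = w}) := by
    intro u hu v hv huv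
    rw [Function.onFun, Set.disjoint_left]
    rintro ω h1 h2
    exact huv ((h1 : ω t = u) ▸ (h2 : ω t = v))
  have : {ω : ℕ → E | ω t ∈ W} = ⋃ w ∈ W, {ω : ℕ → E | ω t = w} := by
    ext ω; simp
  rw [this, measure_biUnion_finset hdisj hm]

end Tools

section Mat
variable {S : Type*} [Fintype S] [DecidableEq S] [Nonempty S]

lemma prod_err (a b c d : ℝ) (ha0 : 0 ≤ a) (ha1 : a ≤ 1) (hb0 : 0 ≤ b) (hb1 : b ≤ 1)
    (hc : 0 ≤ c) (hd : 0 ≤ d) :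
    a * b ≤ max (b - d) 0 * max (a - c) 0 + c + a * d := by
  rcases le_total (a - c) 0 with h | h
  · rw [max_eq_right h]; nlinarith
  · rw [max_eq_left h]
    rcases le_total (b - d) 0 with h2 | h2
    · rw [max_eq_right h2]; nlinarith
    · rw [max_eq_left h2]; nlinarith

def IsStochasticMatrix' (Q : S → S → ℝ) : Prop :=
  (∀ i j, 0 ≤ Q i j) ∧ ∀ i, (∑ j, Q i j) = 1

lemma stoch_pow {Q : S → S → ℝ} (h : IsStochasticMatrix' Q) (m : ℕ) :
    (∀ i j, 0 ≤ ((Matrix.of Q) ^ m) i j) ∧ ∀ i, (∑ j, ((Matrix.of Q) ^ m) i j) = 1 := by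
  induction m with
  | zero =>
    constructor
    · intro i j
      simp only [pow_zero, Matrix.one_apply]
      split <;> norm_num
    · intro i
      simp [Matrix.one_apply, Finset.sum_ite_eq' Finset.univ i]
  | succ m ih =>
    constructor
    · intro i j
      rw [pow_succ, Matrix.mul_apply]
      exact Finset.sum_nonneg fun l _ => mul_nonneg (ih.1 i l) (h.1 l j)
    · intro i
      simp only [pow_succ, Matrix.mul_apply]
      rw [Finset.sum_comm]
      have : ∀ l, ∑ j, ((Matrix.of Q) ^ m) i l * Matrix.of Q l j
          = ((Matrix.of Q) ^ m) i l := by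
        intro l
        rw [← Finset.mul_sum]
        have : ∑ j, Matrix.of Q l j = 1 := h.2 l
        rw [this, mul_one]
      simp only [this]
      exact ih.2 i

lemma stoch_pow_le_one {Q : S → S → ℝ} (h : IsStochasticMatrix' Q) (m : ℕ) (i j : S) :
    ((Matrix.of Q) ^ m) i j ≤ 1 := by
  have := (stoch_pow h m).2 i
  calc ((Matrix.of Q) ^ m) i j ≤ ∑ j', ((Matrix.of Q) ^ m) i j' :=
        Finset.single_le_sum (fun l _ => (stoch_pow h m).1 i l) (Finset.mem_univ j)
    _ = 1 := this

lemma pow_entry_mul_le {Q : S → S → ℝ} (h : IsStochasticMatrix' Q) (a b : ℕ) (i j k : S) :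
    ((Matrix.of Q) ^ a) i j * ((Matrix.of Q) ^ b) j k ≤ ((Matrix.of Q) ^ (a + b)) i k := by
  rw [pow_add, Matrix.mul_apply]
  exact Finset.single_le_sum
    (f := fun l => ((Matrix.of Q) ^ a) i l * ((Matrix.of Q) ^ b) l k)
    (fun l _ => mul_nonneg ((stoch_pow h a).1 i l) ((stoch_pow h b).1 l k))
    (Finset.mem_univ j)

lemma exists_pow_pos {Q : S → S → ℝ} (hQs : IsStochasticMatrix' Q)
    (hQi : ∀ i j, ∃ n : ℕ, 0 < ((Matrix.of Q) ^ n) i j) (s0 : S) (i : S) :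
    ∃ m : ℕ, 1 ≤ m ∧ 0 < ((Matrix.of Q) ^ m) i s0 := by
  by_cases hsub : ∀ j : S, j = s0
  · refine ⟨1, le_refl 1, ?_⟩
    have hi : i = s0 := hsub i
    subst hi
    have h1 : ∑ j, Q i j = 1 := hQs.2 i
    have h2 : ∀ j, Q i j = if j = i then Q i i else 0 := by
      intro j; have := hsub j; have h3 := hsub (i); simp [this, h3]
    have : Q i i = 1 := by
      rw [Finset.sum_congr rfl (fun j _ => h2 j), Finset.sum_ite_eq' Finset.univ i] at h1
      simpa using h1
    simp only [pow_one]
    rw [show (Matrix.of Q) i i = Q i i from rfl, this]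
    norm_num
  · push_neg at hsub
    obtain ⟨j0, hj0⟩ := hsub
    by_cases hi : i = s0
    · subst hi
      obtain ⟨n1, hn1⟩ := hQi i j0
      obtain ⟨n2, hn2⟩ := hQi j0 i
      have hn1' : 1 ≤ n1 := by
        by_contra h
        push_neg at h
        interval_cases n1
        simp only [pow_zero, Matrix.one_apply] at hn1
        rw [if_neg (fun h => hj0 h.symm)] at hn1
        exact lt_irrefl 0 hn1
      have hn2' : 1 ≤ n2 := by
        by_contra h
        push_neg at h
        interval_cases n2
        simp only [pow_zero, Matrix.one_apply] at hn2
        rw [if_neg hj0] at hn2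
        exact lt_irrefl 0 hn2
      exact ⟨n1 + n2, by omega,
        lt_of_lt_of_le (mul_pos hn1 hn2) (pow_entry_mul_le hQs n1 n2 i j0 i)⟩
    · obtain ⟨n, hn⟩ := hQi i s0
      have hn' : 1 ≤ n := by
        by_contra h
        push_neg at h
        interval_cases n
        simp only [pow_zero, Matrix.one_apply] at hn
        rw [if_neg hi] at hn
        exact lt_irrefl 0 hn
      exact ⟨n, hn', hn⟩

end Mat

section Induction
variable {S : Type*} [Fintype S] [DecidableEq S] [Nonempty S]
  [MeasurableSpace S] [MeasurableSingletonClass S]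

lemma step_lower_induction (X : MChain (ℕ × S)) (Q : S → S → ℝ)
    (hQs : IsStochasticMatrix' Q) (δ : ℝ) (hδ : 0 ≤ δ) (X₁ M : ℕ)
    (hq : ∀ x, X₁ ≤ x → ∀ i j : S,
      ENNReal.ofReal (Q i j - δ) ≤ X.P (x, i) {ω | (ω 1).2 = j})
    (hM : ∀ (x : ℕ) (i : S),
      X.P (x, i) {ω | ¬ ((ω 1).1 ≤ x + M ∧ x ≤ (ω 1).1 + M)} ≤ ENNReal.ofReal δ) :
    ∀ (m : ℕ) (i j : S) (x : ℕ), X₁ + m * M ≤ x →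
      ENNReal.ofReal (((Matrix.of Q) ^ m) i j - (m : ℝ) * (2 * Fintype.card S) * δ)
        ≤ X.P (x, i) {ω | (ω m).2 = j} := by
  intro m
  induction m with
  | zero =>
    intro i j x _
    by_cases hij : i = j
    · subst hij
      have h1 : X.P (x, i) {ω | ω 0 = (x, i)} = 1 := X.init (x, i)
      have h2 : X.P (x, i) {ω | ω 0 = (x, i)} ≤ X.P (x, i) {ω | (ω 0).2 = i} := by
        refine measure_mono fun ω hω => ?_
        simp only [Set.mem_setOf_eq] at hω ⊢
        rw [hω]
      have h3 : ENNReal.ofReal (((Matrix.of Q) ^ 0) i i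
          - ((0 : ℕ) : ℝ) * (2 * Fintype.card S) * δ) ≤ 1 := by
        simp [Matrix.one_apply_eq]
      exact le_trans h3 (h1 ▸ h2)
    · have h3 : ENNReal.ofReal (((Matrix.of Q) ^ 0) i j
          - ((0 : ℕ) : ℝ) * (2 * Fintype.card S) * δ) = 0 := by
        simp [Matrix.one_apply_ne hij]
      rw [h3]
      exact zero_le
  | succ m ih =>
    intro i j x hx
    set B : Matrix S S ℝ := (Matrix.of Q) ^ m with hB
    set K : ℝ := 2 * Fintype.card S with hK
    have hK0 : 0 ≤ K := by positivity
    have hmK0 : 0 ≤ (m : ℝ) * K * δ := by positivity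
    set W : Finset (ℕ × S) := (Finset.Icc (x - M) (x + M)) ×ˢ Finset.univ with hW
    -- the one step lower bound
    have key : (∑ w ∈ W, X.P (x, i) {ω | ω 1 = w} * X.P w {ω | (ω m).2 = j})
        ≤ X.P (x, i) {ω | (ω (m + 1)).2 = j} := by
      refine X.one_step_lower (x, i) W {ω | (ω m).2 = j} {ω | (ω (m + 1)).2 = j}
        (meas_coord (E := ℕ × S) m (A := {w | w.2 = j}) MeasurableSet.of_discrete) ?_
      intro w _ ω h1 h2
      simp only [Set.mem_setOf_eq] at h2 ⊢
      rwa [Nat.add_comm 1 m] at h2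
    -- bound each summand from below using ih
    have step1 : (∑ w ∈ W, X.P (x, i) {ω | ω 1 = w}
          * ENNReal.ofReal (B w.2 j - (m : ℝ) * K * δ))
        ≤ ∑ w ∈ W, X.P (x, i) {ω | ω 1 = w} * X.P w {ω | (ω m).2 = j} := by
      refine Finset.sum_le_sum fun w hw => ?_
      have hy : X₁ + m * M ≤ w.1 := by
        rw [hW, Finset.mem_product, Finset.mem_Icc] at hw
        rw [Nat.succ_mul] at hx
        omega
      exact mul_le_mul_right (ih w.2 j w.1 hy) _
    -- regroup the sum over the product
    have step2 : (∑ w ∈ W, X.P (x, i) {ω | ω 1 = w}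
          * ENNReal.ofReal (B w.2 j - (m : ℝ) * K * δ))
        = ∑ l : S, ENNReal.ofReal (B l j - (m : ℝ) * K * δ)
            * X.P (x, i) {ω | ω 1 ∈ ((Finset.Icc (x - M) (x + M)) ×ˢ ({l} : Finset S)
              : Finset (ℕ × S))} := by
      rw [hW, Finset.sum_product]
      rw [Finset.sum_comm]
      refine Finset.sum_congr rfl fun l _ => ?_
      rw [X.fiber_sum (x, i) 1 ((Finset.Icc (x - M) (x + M)) ×ˢ ({l} : Finset S)),
        Finset.sum_product]
      simp only [Finset.sum_singleton]
      rw [Finset.mul_sum]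
      refine Finset.sum_congr rfl fun y _ => mul_comm _ _
    -- lower bound the window probability
    have step3 : ∀ l : S, ENNReal.ofReal (Q i l - 2 * δ)
        ≤ X.P (x, i) {ω | ω 1 ∈ ((Finset.Icc (x - M) (x + M)) ×ˢ ({l} : Finset S)
          : Finset (ℕ × S))} := by
      intro l
      have hsplit : X.P (x, i) {ω | (ω 1).2 = l}
          ≤ X.P (x, i) {ω | ω 1 ∈ ((Finset.Icc (x - M) (x + M)) ×ˢ ({l} : Finset S)
              : Finset (ℕ × S))}
            + X.P (x, i) {ω | ¬ ((ω 1).1 ≤ x + M ∧ x ≤ (ω 1).1 + M)} := by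
        refine le_trans (measure_mono ?_) (measure_union_le _ _)
        intro ω hω
        by_cases hgood : (ω 1).1 ≤ x + M ∧ x ≤ (ω 1).1 + M
        · refine Or.inl ?_
          show ω 1 ∈ (Finset.Icc (x - M) (x + M)) ×ˢ ({l} : Finset S)
          rw [Finset.mem_product, Finset.mem_Icc, Finset.mem_singleton]
          exact ⟨⟨by omega, hgood.1⟩, hω⟩
        · exact Or.inr hgood
      have h1 : ENNReal.ofReal (Q i l - δ) ≤ X.P (x, i) {ω | (ω 1).2 = l} :=
        hq x (by omega) i l
      have h2 := hM x i
      have h3 : ENNReal.ofReal (Q i l - δ)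
          ≤ X.P (x, i) {ω | ω 1 ∈ ((Finset.Icc (x - M) (x + M)) ×ˢ ({l} : Finset S)
              : Finset (ℕ × S))} + ENNReal.ofReal δ :=
        le_trans h1 (le_trans hsplit (add_le_add_right h2 _))
      have h4 : ENNReal.ofReal (Q i l - 2 * δ)
          = ENNReal.ofReal (Q i l - δ) - ENNReal.ofReal δ := by
        rw [← ENNReal.ofReal_sub _ hδ]
        ring_nf
      rw [h4]
      exact tsub_le_iff_right.mpr h3
    -- put it together in ℝ≥0∞ and descend to ℝ
    have ofReal_max : ∀ a : ℝ, ENNReal.ofReal a = ENNReal.ofReal (max a 0) := by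
      intro a
      rcases le_total a 0 with h | h
      · rw [max_eq_right h, ENNReal.ofReal_of_nonpos h, ENNReal.ofReal_zero]
      · rw [max_eq_left h]
    have hQle1 : ∀ l, Q i l ≤ 1 := by
      intro l
      have := hQs.2 i
      calc Q i l ≤ ∑ l', Q i l' :=
            Finset.single_le_sum (fun l' _ => hQs.1 i l') (Finset.mem_univ l)
        _ = 1 := this
    have hreal : ((Matrix.of Q) ^ (m + 1)) i j - ((m : ℝ) + 1) * K * δ
        ≤ ∑ l : S, max (B l j - (m : ℝ) * K * δ) 0 * max (Q i l - 2 * δ) 0 := by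
      have hexp : ((Matrix.of Q) ^ (m + 1)) i j = ∑ l, Q i l * B l j := by
        rw [pow_succ', Matrix.mul_apply, hB]
        rfl
      have hper : ∀ l : S, Q i l * B l j
          ≤ max (B l j - (m : ℝ) * K * δ) 0 * max (Q i l - 2 * δ) 0
            + 2 * δ + Q i l * ((m : ℝ) * K * δ) :=
        fun l => prod_err (Q i l) (B l j) (2 * δ) ((m : ℝ) * K * δ)
          (hQs.1 i l) (hQle1 l) ((stoch_pow hQs m).1 l j) (stoch_pow_le_one hQs m l j)
          (by positivity) hmK0
      have hsum : ∑ l, Q i l * B l j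
          ≤ (∑ l : S, max (B l j - (m : ℝ) * K * δ) 0 * max (Q i l - 2 * δ) 0)
            + (Fintype.card S : ℝ) * (2 * δ) + (∑ l, Q i l) * ((m : ℝ) * K * δ) := by
        calc ∑ l, Q i l * B l j
            ≤ ∑ l : S, (max (B l j - (m : ℝ) * K * δ) 0 * max (Q i l - 2 * δ) 0
              + 2 * δ + Q i l * ((m : ℝ) * K * δ)) :=
              Finset.sum_le_sum fun l _ => hper l
          _ = (∑ l : S, max (B l j - (m : ℝ) * K * δ) 0 * max (Q i l - 2 * δ) 0)
              + (Fintype.card S : ℝ) * (2 * δ) + (∑ l, Q i l) * ((m : ℝ) * K * δ) := by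
              rw [Finset.sum_add_distrib, Finset.sum_add_distrib, Finset.sum_const,
                Finset.card_univ, nsmul_eq_mul, Finset.sum_mul]
      rw [hexp]
      rw [hQs.2 i] at hsum
      rw [hK] at *
      nlinarith [hsum]
    calc ENNReal.ofReal (((Matrix.of Q) ^ (m + 1)) i j
            - ((m + 1 : ℕ) : ℝ) * (2 * Fintype.card S) * δ)
        = ENNReal.ofReal (((Matrix.of Q) ^ (m + 1)) i j - ((m : ℝ) + 1) * K * δ) := by
          rw [hK]; push_cast; ring_nf
      _ ≤ ENNReal.ofReal (∑ l : S, max (B l j - (m : ℝ) * K * δ) 0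
            * max (Q i l - 2 * δ) 0) := ENNReal.ofReal_le_ofReal hreal
      _ = ∑ l : S, ENNReal.ofReal (max (B l j - (m : ℝ) * K * δ) 0
            * max (Q i l - 2 * δ) 0) :=
          ENNReal.ofReal_sum_of_nonneg fun l _ =>
            mul_nonneg (le_max_right _ _) (le_max_right _ _)
      _ = ∑ l : S, ENNReal.ofReal (B l j - (m : ℝ) * K * δ)
            * ENNReal.ofReal (Q i l - 2 * δ) := by
          refine Finset.sum_congr rfl fun l _ => ?_
          rw [ENNReal.ofReal_mul (le_max_right _ _), ← ofReal_max, ← ofReal_max]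
      _ ≤ ∑ l : S, ENNReal.ofReal (B l j - (m : ℝ) * K * δ)
            * X.P (x, i) {ω | ω 1 ∈ ((Finset.Icc (x - M) (x + M)) ×ˢ ({l} : Finset S)
              : Finset (ℕ × S))} :=
          Finset.sum_le_sum fun l _ => mul_le_mul_right (step3 l) _
      _ = ∑ w ∈ W, X.P (x, i) {ω | ω 1 = w}
            * ENNReal.ofReal (B w.2 j - (m : ℝ) * K * δ) := step2.symm
      _ ≤ ∑ w ∈ W, X.P (x, i) {ω | ω 1 = w} * X.P w {ω | (ω m).2 = j} := step1
      _ ≤ X.P (x, i) {ω | (ω (m + 1)).2 = j} := key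
end Induction

section Derive
variable {S : Type*} [Fintype S] [DecidableEq S] [Nonempty S]
  [MeasurableSpace S] [MeasurableSingletonClass S]

/-- condition (B_p) as in the target file -/
def CondB' (X : MChain (ℕ × S)) (p : ℝ) : Prop :=
  ∃ C : ℝ≥0∞, C ≠ ⊤ ∧ ∀ (x : ℕ) (i : S),
    (∫⁻ ω, ENNReal.ofReal (|((ω 1).1 : ℝ) - (x : ℝ)| ^ p) ∂(X.P (x, i))) ≤ C

lemma jump_tail (X : MChain (ℕ × S)) (p : ℝ) (hp : 1 < p) (hB : CondB' X p)
    (δ : ℝ) (hδ : 0 < δ) :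
    ∃ M : ℕ, ∀ (x : ℕ) (i : S),
      X.P (x, i) {ω | ¬ ((ω 1).1 ≤ x + M ∧ x ≤ (ω 1).1 + M)} ≤ ENNReal.ofReal δ := by
  obtain ⟨C, hC, hCb⟩ := hB
  set c : ℝ := C.toReal with hc
  have hc0 : 0 ≤ c := ENNReal.toReal_nonneg
  set M : ℕ := ⌈c / δ⌉₊ with hM
  refine ⟨M, fun x i => ?_⟩
  have hM1 : (1 : ℝ) ≤ (M : ℝ) + 1 := by have : (0:ℝ) ≤ (M:ℝ) := Nat.cast_nonneg M; linarith
  have hMp : ((M : ℝ) + 1) ≤ ((M : ℝ) + 1) ^ p := by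
    calc ((M : ℝ) + 1) = ((M : ℝ) + 1) ^ (1 : ℝ) := (Real.rpow_one _).symm
      _ ≤ ((M : ℝ) + 1) ^ p := Real.rpow_le_rpow_of_exponent_le hM1 (le_of_lt hp)
  have hMc : c / δ ≤ (M : ℝ) + 1 := le_trans (Nat.le_ceil _) (by linarith [show ((⌈c / δ⌉₊ : ℕ) : ℝ) = (M : ℝ) from rfl])
  have hMpos : (0 : ℝ) < ((M : ℝ) + 1) ^ p := by
    calc (0 : ℝ) < 1 := one_pos
      _ ≤ (M : ℝ) + 1 := hM1
      _ ≤ ((M : ℝ) + 1) ^ p := hMp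
  -- measurability of the integrand
  have hfm : Measurable (fun ω : ℕ → ℕ × S =>
      ENNReal.ofReal (|((ω 1).1 : ℝ) - (x : ℝ)| ^ p)) := by
    have h1 : Measurable (fun w : ℕ × S => ENNReal.ofReal (|(w.1 : ℝ) - (x : ℝ)| ^ p)) :=
      Measurable.of_discrete
    exact h1.comp (measurable_pi_apply 1)
  -- the bad event sits inside a superlevel set
  have hsub : {ω : ℕ → ℕ × S | ¬ ((ω 1).1 ≤ x + M ∧ x ≤ (ω 1).1 + M)}
      ⊆ {ω : ℕ → ℕ × S | ENNReal.ofReal (((M : ℝ) + 1) ^ p)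
          ≤ ENNReal.ofReal (|((ω 1).1 : ℝ) - (x : ℝ)| ^ p)} := by
    intro ω hω
    simp only [Set.mem_setOf_eq] at hω ⊢
    have habs : (M : ℝ) + 1 ≤ |((ω 1).1 : ℝ) - (x : ℝ)| := by
      push_neg at hω
      rcases le_or_gt ((ω 1).1) (x + M) with h | h
      · have h2 := hω h
        have : ((ω 1).1 : ℝ) + ((M : ℝ) + 1) ≤ (x : ℝ) := by
          have : (ω 1).1 + (M + 1) ≤ x := by omega
          exact_mod_cast this
        rw [abs_sub_comm]
        rw [le_abs]
        left; linarith
      · have : (x : ℝ) + ((M : ℝ) + 1) ≤ ((ω 1).1 : ℝ) := by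
          have : x + (M + 1) ≤ (ω 1).1 := by omega
          exact_mod_cast this
        rw [le_abs]
        left; linarith
    refine ENNReal.ofReal_le_ofReal ?_
    exact Real.rpow_le_rpow (by linarith) habs (by linarith)
  have hlev := mul_meas_ge_le_lintegral₀ (μ := X.P (x, i)) hfm.aemeasurable
    (ENNReal.ofReal (((M : ℝ) + 1) ^ p))
  have hkey : ENNReal.ofReal (((M : ℝ) + 1) ^ p)
      * X.P (x, i) {ω | ¬ ((ω 1).1 ≤ x + M ∧ x ≤ (ω 1).1 + M)} ≤ C := by
    calc ENNReal.ofReal (((M : ℝ) + 1) ^ p)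
          * X.P (x, i) {ω | ¬ ((ω 1).1 ≤ x + M ∧ x ≤ (ω 1).1 + M)}
        ≤ ENNReal.ofReal (((M : ℝ) + 1) ^ p)
          * X.P (x, i) {ω | ENNReal.ofReal (((M : ℝ) + 1) ^ p)
            ≤ ENNReal.ofReal (|((ω 1).1 : ℝ) - (x : ℝ)| ^ p)} :=
          mul_le_mul_right (measure_mono hsub) _
      _ ≤ ∫⁻ ω, ENNReal.ofReal (|((ω 1).1 : ℝ) - (x : ℝ)| ^ p) ∂(X.P (x, i)) := hlev
      _ ≤ C := hCb x i
  -- conclude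
  have hCc : C = ENNReal.ofReal c := (ENNReal.ofReal_toReal hC).symm
  rw [hCc] at hkey
  have hdiv : X.P (x, i) {ω | ¬ ((ω 1).1 ≤ x + M ∧ x ≤ (ω 1).1 + M)}
      ≤ ENNReal.ofReal c / ENNReal.ofReal (((M : ℝ) + 1) ^ p) :=
    ENNReal.le_div_iff_mul_le (Or.inl (by
        simp only [ne_eq, ENNReal.ofReal_eq_zero, not_le]
        exact hMpos))
      (Or.inl ENNReal.ofReal_ne_top) |>.mpr (by rwa [mul_comm] at hkey)
  refine le_trans hdiv ?_
  rw [← ENNReal.ofReal_div_of_pos hMpos]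
  refine ENNReal.ofReal_le_ofReal ?_
  rw [div_le_iff₀ hMpos]
  calc c = (c / δ) * δ := by field_simp
    _ ≤ (((M : ℝ) + 1) ^ p) * δ := by
        refine mul_le_mul_of_nonneg_right (le_trans hMc hMp) (le_of_lt hδ)
    _ = δ * ((M : ℝ) + 1) ^ p := mul_comm _ _

lemma q_lower (X : MChain (ℕ × S)) (Q : S → S → ℝ)
    (hq : ∀ i j, Filter.Tendsto (fun x : ℕ => (X.P (x, i) {ω | (ω 1).2 = j}).toReal)
      Filter.atTop (nhds (Q i j)))
    (δ : ℝ) (hδ : 0 < δ) :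
    ∃ X₁ : ℕ, ∀ x, X₁ ≤ x → ∀ i j : S,
      ENNReal.ofReal (Q i j - δ) ≤ X.P (x, i) {ω | (ω 1).2 = j} := by
  have h : ∀ i j : S, ∃ N : ℕ, ∀ x, N ≤ x →
      Q i j - δ ≤ (X.P (x, i) {ω | (ω 1).2 = j}).toReal := by
    intro i j
    have := (hq i j).eventually (eventually_ge_nhds (show Q i j - δ < Q i j by linarith))
    rw [Filter.eventually_atTop] at this
    obtain ⟨N, hN⟩ := this
    exact ⟨N, fun x hx => hN x hx⟩
  choose N hN using h
  classical
  refine ⟨Finset.univ.sup (fun ij : S × S => N ij.1 ij.2), fun x hx i j => ?_⟩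
  have hx' : N i j ≤ x :=
    le_trans (Finset.le_sup (f := fun ij : S × S => N ij.1 ij.2)
      (Finset.mem_univ (i, j))) hx
  have h1 := hN i j x hx'
  exact ENNReal.ofReal_le_of_le_toReal h1

end Derive

section Hit
variable {S : Type*} [Fintype S] [DecidableEq S] [Nonempty S]
  [MeasurableSpace S] [MeasurableSingletonClass S]

lemma hit_pos (X : MChain (ℕ × S))
    (hirr : ∀ z w : ℕ × S, ∃ n : ℕ, X.P z {ω | ω n = w} ≠ 0) (s0 : S) (z : ℕ × S) :
    ∃ n : ℕ, 1 ≤ n ∧ X.P z {ω | (ω n).2 = s0} ≠ 0 := by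
  classical
  set w : ℕ × S := if z = (0, s0) then (1, s0) else (0, s0) with hw
  have hwz : w ≠ z := by
    rw [hw]
    split
    · rename_i h; rw [h]; intro hc; exact absurd (congrArg Prod.fst hc) (by simp)
    · rename_i h; exact fun hc => h hc.symm
  have hws : w.2 = s0 := by rw [hw]; split <;> rfl
  obtain ⟨n, hn⟩ := hirr z w
  have hn1 : 1 ≤ n := by
    by_contra h
    push_neg at h
    interval_cases n
    apply hn
    have hinit := X.init z
    have : IsProbabilityMeasure (X.P z) := X.isProb z
    have hcompl : X.P z {ω | ω 0 = z}ᶜ = 0 := by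
      rw [measure_compl (meas_eq 0 z) (measure_ne_top _ _), hinit]
      simp
    refine measure_mono_null ?_ hcompl
    intro ω hω
    simp only [Set.mem_compl_iff, Set.mem_setOf_eq] at hω ⊢
    rw [hω]
    exact hwz
  refine ⟨n, hn1, fun hc => hn (measure_mono_null ?_ hc)⟩
  intro ω hω
  simp only [Set.mem_setOf_eq] at hω ⊢
  rw [hω, hws]

lemma uniform_hit (X : MChain (ℕ × S))
    (hirr : ∀ z w : ℕ × S, ∃ n : ℕ, X.P z {ω | ω n = w} ≠ 0) (s0 : S)
    (p : ℝ) (hp : 1 < p) (hB : CondB' X p) (Q : S → S → ℝ)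
    (hql : ∀ i j, Filter.Tendsto (fun x : ℕ => (X.P (x, i) {ω | (ω 1).2 = j}).toReal)
      Filter.atTop (nhds (Q i j)))
    (hQs : IsStochasticMatrix' Q)
    (hQi : ∀ i j, ∃ n : ℕ, 0 < ((Matrix.of Q) ^ n) i j) :
    ∃ (k : ℕ) (ε : ℝ), 1 ≤ k ∧ 0 < ε ∧ ε ≤ 1/2 ∧ ∀ z : ℕ × S,
      ENNReal.ofReal ε ≤ X.P z {ω | ∃ m, 1 ≤ m ∧ m ≤ k ∧ (ω m).2 = s0} := by
  classical
  choose mf hmf1 hmfpos using fun i => exists_pow_pos hQs hQi s0 i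
  set K' : ℕ := Finset.univ.sup mf with hK'
  have hK'1 : 1 ≤ K' :=
    le_trans (hmf1 (Classical.arbitrary S)) (Finset.le_sup (Finset.mem_univ _))
  have hmfK : ∀ i, mf i ≤ K' := fun i => Finset.le_sup (Finset.mem_univ i)
  set ρ : ℝ := Finset.univ.inf' Finset.univ_nonempty
    (fun i => ((Matrix.of Q) ^ (mf i)) i s0) with hρ
  have hρpos : 0 < ρ := by
    rw [hρ, Finset.lt_inf'_iff]
    exact fun i _ => hmfpos i
  set Kc : ℝ := 2 * (Fintype.card S : ℝ) with hKc
  have hKc0 : 0 ≤ Kc := by positivity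
  set δ : ℝ := ρ / (2 * ((K' : ℝ) * Kc) + 2) with hδ
  have hden : (0 : ℝ) < 2 * ((K' : ℝ) * Kc) + 2 := by positivity
  have hδpos : 0 < δ := div_pos hρpos hden
  obtain ⟨M, hM⟩ := jump_tail X p hp hB δ hδpos
  obtain ⟨X₁, hq⟩ := q_lower X Q hql δ hδpos
  have main := step_lower_induction X Q hQs δ hδpos.le X₁ M hq hM
  set X₂ : ℕ := X₁ + K' * M + 1 with hX₂
  choose nf hnf1 hnfpos using fun z => hit_pos X hirr s0 z
  set F : Finset (ℕ × S) := (Finset.range X₂) ×ˢ Finset.univ with hF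
  have hFne : F.Nonempty := ⟨(0, Classical.arbitrary S), by
    rw [hF, Finset.mem_product]
    exact ⟨Finset.mem_range.mpr (by omega), Finset.mem_univ _⟩⟩
  set k : ℕ := max K' (F.sup nf) with hk
  set ε₂ : ℝ := F.inf' hFne (fun z => (X.P z {ω | (ω (nf z)).2 = s0}).toReal) with hε₂
  have hε₂pos : 0 < ε₂ := by
    rw [hε₂, Finset.lt_inf'_iff]
    intro z _
    haveI := X.isProb z
    exact ENNReal.toReal_pos (hnfpos z) (measure_ne_top _ _)
  set ε : ℝ := min (min (ρ / 2) ε₂) (1 / 2) with hε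
  have hεpos : 0 < ε := by
    rw [hε]
    exact lt_min (lt_min (by linarith) hε₂pos) (by norm_num)
  refine ⟨k, ε, le_trans hK'1 (le_max_left _ _), hεpos, min_le_right _ _, fun z => ?_⟩
  obtain ⟨x, i⟩ := z
  by_cases hx : x < X₂
  · -- bounded box: use irreducibility
    have hzF : (x, i) ∈ F := by
      rw [hF, Finset.mem_product]
      exact ⟨Finset.mem_range.mpr hx, Finset.mem_univ _⟩
    have h1 : ε ≤ (X.P (x, i) {ω | (ω (nf (x, i))).2 = s0}).toReal :=
      le_trans (le_trans (min_le_left _ _) (min_le_right _ _))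
        (Finset.inf'_le _ hzF)
    have h2 : ENNReal.ofReal ε ≤ X.P (x, i) {ω | (ω (nf (x, i))).2 = s0} :=
      ENNReal.ofReal_le_of_le_toReal h1
    refine le_trans h2 (measure_mono ?_)
    intro ω hω
    exact ⟨nf (x, i), hnf1 (x, i),
      le_trans (Finset.le_sup hzF) (le_max_right _ _), hω⟩
  · -- large x: use the induction bound
    push_neg at hx
    have hxge : X₁ + mf i * M ≤ x := by
      have h1 : mf i * M ≤ K' * M := Nat.mul_le_mul_right M (hmfK i)
      omega
    have h2 := main (mf i) i s0 x hxge
    have h3 : ε ≤ ((Matrix.of Q) ^ (mf i)) i s0 - (mf i : ℝ) * Kc * δ := by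
      have hle : ρ ≤ ((Matrix.of Q) ^ (mf i)) i s0 :=
        Finset.inf'_le _ (Finset.mem_univ i)
      have hmfc : (mf i : ℝ) ≤ (K' : ℝ) := Nat.cast_le.mpr (hmfK i)
      have herr : (mf i : ℝ) * Kc * δ ≤ ρ / 2 := by
        have h4 : (mf i : ℝ) * Kc * δ ≤ (K' : ℝ) * Kc * δ :=
          mul_le_mul_of_nonneg_right (mul_le_mul_of_nonneg_right hmfc hKc0) hδpos.le
        have h5 : (K' : ℝ) * Kc * δ ≤ ρ / 2 := by
          have hKK : 0 ≤ (K' : ℝ) * Kc := by positivity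
          rw [hδ, ← mul_div_assoc, div_le_div_iff₀ hden (by norm_num : (0:ℝ) < 2)]
          nlinarith
        linarith
      have hεle : ε ≤ ρ / 2 := le_trans (min_le_left _ _) (min_le_left _ _)
      linarith
    have h4 : ENNReal.ofReal ε ≤ X.P (x, i) {ω | (ω (mf i)).2 = s0} :=
      le_trans (ENNReal.ofReal_le_ofReal h3) h2
    refine le_trans h4 (measure_mono ?_)
    intro ω hω
    exact ⟨mf i, hmf1 i, le_trans (hmfK i) (le_max_left _ _), hω⟩

end Hit

section Tail
variable {S : Type*} [Fintype S] [DecidableEq S] [Nonempty S]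
  [MeasurableSpace S] [MeasurableSingletonClass S]

/-- the no-visit event -/
def noVis (s0 : S) (r : ℕ) : Set (ℕ → ℕ × S) :=
  {ω | ∀ n, 1 ≤ n → n ≤ r → (ω n).2 ≠ s0}

lemma noVis_det (s0 : S) (r : ℕ) :
    ∀ ω ω' : ℕ → ℕ × S, (∀ n, n ≤ r → ω n = ω' n) → ω ∈ noVis s0 r → ω' ∈ noVis s0 r := by
  intro ω ω' hag hω n h1 h2
  rw [← hag n h2]
  exact hω n h1 h2

lemma noVis_meas (s0 : S) (r : ℕ) : MeasurableSet (noVis s0 r) :=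
  meas_det (noVis_det s0 r)

lemma noVis_compl (s0 : S) (k : ℕ) :
    noVis s0 k = {ω : ℕ → ℕ × S | ∃ m, 1 ≤ m ∧ m ≤ k ∧ (ω m).2 = s0}ᶜ := by
  ext ω
  simp only [noVis, Set.mem_setOf_eq, Set.mem_compl_iff, not_exists]
  constructor
  · intro h m
    intro hc
    exact h m hc.1 hc.2.1 hc.2.2
  · intro h n h1 h2 hc
    exact h n ⟨h1, h2, hc⟩

lemma noVis_iterate (X : MChain (ℕ × S)) (s0 : S) (k : ℕ) (ε : ℝ)
    (hε0 : 0 < ε) (hε1 : ε ≤ 1/2)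
    (hhit : ∀ z : ℕ × S,
      ENNReal.ofReal ε ≤ X.P z {ω | ∃ m, 1 ≤ m ∧ m ≤ k ∧ (ω m).2 = s0}) :
    ∀ (z : ℕ × S) (j : ℕ), X.P z (noVis s0 (j * k)) ≤ ENNReal.ofReal ((1 - ε) ^ j) := by
  intro z j
  induction j generalizing z with
  | zero =>
    haveI := X.isProb z
    simpa using prob_le_one
  | succ j ih =>
    haveI := X.isProb z
    -- P w (noVis k) ≤ 1 - ofReal ε for every w
    have hb : ∀ w : ℕ × S, X.P w (noVis s0 k) ≤ ENNReal.ofReal (1 - ε) := by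
      intro w
      haveI := X.isProb w
      have hceq : X.P w (noVis s0 k)
          = 1 - X.P w {ω | ∃ m, 1 ≤ m ∧ m ≤ k ∧ (ω m).2 = s0} := by
        rw [noVis_compl]
        rw [measure_compl ?_ (measure_ne_top _ _)]
        · rw [measure_univ]
        · have : {ω : ℕ → ℕ × S | ∃ m, 1 ≤ m ∧ m ≤ k ∧ (ω m).2 = s0}
              = (noVis s0 k)ᶜ := by rw [noVis_compl, compl_compl]
          rw [this]
          exact (noVis_meas s0 k).compl
      rw [hceq]
      have h1 : ENNReal.ofReal (1 - ε) = 1 - ENNReal.ofReal ε := by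
        rw [← ENNReal.ofReal_one, ← ENNReal.ofReal_sub _ hε0.le]
      rw [h1]
      exact tsub_le_tsub_left (hhit w) 1
    -- inclusion into the decomposed event
    have hincl : noVis s0 ((j + 1) * k)
        ⊆ noVis s0 (j * k) ∩ {ω | ω (j * k) ∈ (Set.univ : Set (ℕ × S))}
          ∩ {ω | (fun m => ω (j * k + m)) ∈ noVis s0 k} := by
      intro ω hω
      refine ⟨⟨fun n h1 h2 => hω n h1 (le_trans h2 (by nlinarith)), trivial⟩, ?_⟩
      intro n h1 h2
      refine hω (j * k + n) (by omega) ?_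
      have : (j + 1) * k = j * k + k := by ring
      omega
    have hdec := X.shift_bound z (j * k) Set.univ (noVis s0 (j * k)) (noVis s0 k)
      (noVis_meas s0 k) (fun ω ω' hag hω => noVis_det s0 (j * k) ω ω'
        (fun n hn => hag n hn) hω)
      (ENNReal.ofReal (1 - ε)) (fun w _ => hb w)
    calc X.P z (noVis s0 ((j + 1) * k))
        ≤ X.P z (noVis s0 (j * k) ∩ {ω | ω (j * k) ∈ (Set.univ : Set (ℕ × S))}
            ∩ {ω | (fun m => ω (j * k + m)) ∈ noVis s0 k}) := measure_mono hincl
      _ ≤ ENNReal.ofReal (1 - ε)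
            * X.P z (noVis s0 (j * k) ∩ {ω | ω (j * k) ∈ (Set.univ : Set (ℕ × S))}) := hdec
      _ ≤ ENNReal.ofReal (1 - ε) * ENNReal.ofReal ((1 - ε) ^ j) := by
          refine mul_le_mul_right ?_ _
          refine le_trans (measure_mono ?_) (ih z)
          intro ω hω
          exact hω.1
      _ = ENNReal.ofReal ((1 - ε) ^ (j + 1)) := by
          rw [← ENNReal.ofReal_mul (by linarith)]
          rw [pow_succ]
          ring_nf
      
lemma noVis_tail (X : MChain (ℕ × S)) (s0 : S) (k : ℕ) (hk : 1 ≤ k) (ε : ℝ)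
    (hε0 : 0 < ε) (hε1 : ε ≤ 1/2)
    (hhit : ∀ z : ℕ × S,
      ENNReal.ofReal ε ≤ X.P z {ω | ∃ m, 1 ≤ m ∧ m ≤ k ∧ (ω m).2 = s0}) :
    ∃ cr C : ℝ, 0 < cr ∧ 0 ≤ C ∧ ∀ (z : ℕ × S) (r : ℕ),
      X.P z (noVis s0 r) ≤ ENNReal.ofReal (C * Real.exp (-cr * r)) := by
  set a : ℝ := 1 - ε with ha
  have ha0 : 0 < a := by rw [ha]; linarith
  have ha1 : a < 1 := by rw [ha]; linarith
  set L : ℝ := Real.log a with hL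
  have hLneg : L < 0 := Real.log_neg ha0 ha1
  have hk0 : (0 : ℝ) < (k : ℝ) := by exact_mod_cast hk
  refine ⟨(-L) / k, a⁻¹, div_pos (by linarith) hk0, by positivity, fun z r => ?_⟩
  set j : ℕ := r / k with hj
  have hincl : noVis s0 r ⊆ noVis s0 (j * k) := by
    intro ω hω n h1 h2
    exact hω n h1 (le_trans h2 (by rw [hj]; exact Nat.div_mul_le_self r k))
  have h1 := noVis_iterate X s0 k ε hε0 hε1 hhit z j
  refine le_trans (le_trans (measure_mono hincl) h1) (ENNReal.ofReal_le_ofReal ?_)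
  -- real estimate: a^j ≤ a⁻¹ * exp (-((-L)/k) * r)
  have haj : a ^ j = Real.exp ((j : ℝ) * L) := by
    conv_lhs => rw [← Real.exp_log ha0]
    rw [← Real.exp_nat_mul]
  have hainv : a⁻¹ = Real.exp (-L) := by
    conv_lhs => rw [← Real.exp_log ha0]
    rw [← Real.exp_neg]
  rw [haj, hainv, ← Real.exp_add]
  refine Real.exp_le_exp.mpr ?_
  -- exponent comparison
  have hrk : (r : ℝ) ≤ ((j : ℝ) + 1) * k := by
    have h2 : r < (j + 1) * k := by
      rw [hj]
      have := Nat.div_add_mod r k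
      have := Nat.mod_lt r (by omega : 0 < k)
      nlinarith
    have : (r : ℝ) < (((j + 1) * k : ℕ) : ℝ) := by exact_mod_cast h2
    push_cast at this
    linarith
  have h7 : (r : ℝ) / (k : ℝ) ≤ (j : ℝ) + 1 := (div_le_iff₀ hk0).mpr hrk
  have h8 : L * ((j : ℝ) + 1) ≤ L * ((r : ℝ) / (k : ℝ)) :=
    mul_le_mul_of_nonpos_left h7 hLneg.le
  have h9 : (-(-L) / (k : ℝ)) * (r : ℝ) = L * ((r : ℝ) / (k : ℝ)) := by
    field_simp
  have h10 : -L + -((-L) / (k : ℝ)) * (r : ℝ) = -L + L * ((r : ℝ) / (k : ℝ)) := by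
    rw [← h9]; ring_nf
  nlinarith [h8]

end Tail

section GoodSet
variable {S : Type*} [Fintype S] [DecidableEq S] [Nonempty S]
  [MeasurableSpace S] [MeasurableSingletonClass S]

/-- the event of infinitely many visits of the `S` coordinate to `s0` -/
def Gset (s0 : S) : Set (ℕ → ℕ × S) := {ω | ∀ t : ℕ, ∃ m, t < m ∧ (ω m).2 = s0}

lemma Gset_meas (s0 : S) : MeasurableSet (Gset s0) := by
  have h : Gset s0 = ⋂ t : ℕ, ⋃ m : ℕ, {ω : ℕ → ℕ × S | (ω (t + 1 + m)).2 = s0} := by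
    ext ω
    simp only [Gset, Set.mem_setOf_eq, Set.mem_iInter, Set.mem_iUnion]
    constructor
    · intro h t
      obtain ⟨m, hm1, hm2⟩ := h t
      exact ⟨m - (t + 1), by rwa [show t + 1 + (m - (t+1)) = m by omega]⟩
    · intro h t
      obtain ⟨m, hm⟩ := h t
      exact ⟨t + 1 + m, by omega, hm⟩
  rw [h]
  refine MeasurableSet.iInter fun t => MeasurableSet.iUnion fun m => ?_
  exact meas_coord (t + 1 + m) (MeasurableSet.of_discrete (s := {w : ℕ × S | w.2 = s0}))

lemma Gset_null (X : MChain (ℕ × S)) (s0 : S) (cr C : ℝ) (hcr : 0 < cr)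
    (hC : ∀ (z : ℕ × S) (r : ℕ),
      X.P z (noVis s0 r) ≤ ENNReal.ofReal (C * Real.exp (-cr * r))) (z : ℕ × S) :
    X.P z (Gset s0)ᶜ = 0 := by
  have hcompl : (Gset s0)ᶜ = ⋃ t : ℕ, {ω : ℕ → ℕ × S | ∀ m, t < m → (ω m).2 ≠ s0} := by
    ext ω
    simp only [Gset, Set.mem_compl_iff, Set.mem_setOf_eq, Set.mem_iUnion, not_forall,
      not_exists]
    constructor
    · rintro ⟨t, ht⟩
      exact ⟨t, fun m hm hc => ht m ⟨hm, hc⟩⟩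
    · rintro ⟨t, ht⟩
      exact ⟨t, fun m hm => ht m hm.1 hm.2⟩
  rw [hcompl]
  refine measure_iUnion_null fun t => ?_
  -- each tail event has probability ≤ C e^{-cr r} for every r
  have hb : ∀ r : ℕ, X.P z {ω : ℕ → ℕ × S | ∀ m, t < m → (ω m).2 ≠ s0}
      ≤ ENNReal.ofReal (C * Real.exp (-cr * r)) := by
    intro r
    have hsub : {ω : ℕ → ℕ × S | ∀ m, t < m → (ω m).2 ≠ s0}
        ⊆ Set.univ ∩ {ω : ℕ → ℕ × S | ω t ∈ (Set.univ : Set (ℕ × S))}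
          ∩ {ω | (fun m => ω (t + m)) ∈ noVis s0 r} := by
      intro ω hω
      refine ⟨⟨trivial, trivial⟩, ?_⟩
      intro m h1 _
      exact hω (t + m) (by omega)
    refine le_trans (measure_mono hsub) ?_
    have := X.shift_bound z t Set.univ Set.univ (noVis s0 r) (noVis_meas s0 r)
      (fun _ _ _ h => h) (ENNReal.ofReal (C * Real.exp (-cr * r))) (fun w _ => hC w r)
    refine le_trans this ?_
    haveI := X.isProb z
    calc ENNReal.ofReal (C * Real.exp (-cr * r))
          * X.P z (Set.univ ∩ {ω : ℕ → ℕ × S | ω t ∈ (Set.univ : Set (ℕ × S))})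
        ≤ ENNReal.ofReal (C * Real.exp (-cr * r)) * 1 :=
          mul_le_mul_right prob_le_one _
      _ = ENNReal.ofReal (C * Real.exp (-cr * r)) := mul_one _
  -- the bound tends to zero
  have hlim : Filter.Tendsto (fun r : ℕ => ENNReal.ofReal (C * Real.exp (-cr * r)))
      Filter.atTop (nhds 0) := by
    have h1 : Filter.Tendsto (fun r : ℕ => C * Real.exp (-cr * r))
        Filter.atTop (nhds 0) := by
      have h2 : ∀ r : ℕ, C * Real.exp (-cr * r) = C * (Real.exp (-cr)) ^ r := by
        intro r
        rw [← Real.exp_nat_mul]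
        ring_nf
      simp only [h2]
      rw [show (0 : ℝ) = C * 0 by ring]
      refine Filter.Tendsto.const_mul C ?_
      refine tendsto_pow_atTop_nhds_zero_of_lt_one (Real.exp_nonneg _) ?_
      rw [Real.exp_lt_one_iff]
      linarith
    have h3 := (ENNReal.continuous_ofReal.tendsto 0).comp h1
    simpa [Function.comp_def] using h3
  have := ge_of_tendsto' hlim (fun r => hb r)
  exact le_antisymm this zero_le

/-- number of visits strictly before time `t` -/
def cardBelow (s0 : S) (ω : ℕ → ℕ × S) (t : ℕ) : ℕ :=
  ((Finset.range t).filter (fun m => (ω m).2 = s0)).card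

/-- the cylinder-determined event `τ_n = t` (on `Gset`) -/
def Bnt (s0 : S) (n t : ℕ) : Set (ℕ → ℕ × S) :=
  {ω | (ω t).2 = s0 ∧ cardBelow s0 ω t = n}

lemma Bnt_det (s0 : S) (n t : ℕ) :
    ∀ ω ω' : ℕ → ℕ × S, (∀ k, k ≤ t → ω k = ω' k) → ω ∈ Bnt s0 n t → ω' ∈ Bnt s0 n t := by
  intro ω ω' hag ⟨h1, h2⟩
  constructor
  · rw [← hag t le_rfl]; exact h1
  · rw [← h2]
    unfold cardBelow
    congr 1
    refine Finset.filter_congr fun m hm => ?_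
    rw [Finset.mem_range] at hm
    rw [hag m (by omega)]

lemma Bnt_meas (s0 : S) (n t : ℕ) : MeasurableSet (Bnt s0 n t) :=
  meas_det (Bnt_det s0 n t)

lemma Bnt_disj (s0 : S) (n : ℕ) : ∀ t t' : ℕ, t ≠ t' →
    Disjoint (Bnt s0 n t) (Bnt s0 n t') := by
  have key : ∀ t t' : ℕ, t < t' → ∀ ω : ℕ → ℕ × S,
      ω ∈ Bnt s0 n t → ω ∈ Bnt s0 n t' → False := by
    intro t t' htt ω ⟨h1, h2⟩ ⟨h1', h2'⟩
    have hsub : insert t ((Finset.range t).filter (fun m => (ω m).2 = s0))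
        ⊆ (Finset.range t').filter (fun m => (ω m).2 = s0) := by
      intro m hm
      rw [Finset.mem_insert] at hm
      rcases hm with hm | hm
      · subst hm
        rw [Finset.mem_filter, Finset.mem_range]
        exact ⟨htt, h1⟩
      · rw [Finset.mem_filter, Finset.mem_range] at hm ⊢
        exact ⟨by omega, hm.2⟩
    have hcard := Finset.card_le_card hsub
    rw [Finset.card_insert_of_notMem (by
      rw [Finset.mem_filter, Finset.mem_range]
      exact fun h => absurd h.1 (lt_irrefl t))] at hcard
    unfold cardBelow at h2 h2'
    omega
  intro t t' htt
  rw [Set.disjoint_left]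
  intro ω h1 h2
  rcases Nat.lt_or_ge t t' with h | h
  · exact key t t' h ω h1 h2
  · exact key t' t (by omega) ω h2 h1

end GoodSet

section TauPart
variable {S : Type*} [Fintype S] [DecidableEq S] [Nonempty S]
  [MeasurableSpace S] [MeasurableSingletonClass S]

lemma tau_spec (s0 : S) (ω : ℕ → ℕ × S) (hG : ω ∈ Gset s0) (n : ℕ) :
    ω ∈ Bnt s0 n (tauSeq s0 ω n) := by
  induction n with
  | zero =>
    have hne : {m | (ω m).2 = s0}.Nonempty := by
      obtain ⟨m, _, hm⟩ := hG 0
      exact ⟨m, hm⟩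
    have heq : tauSeq s0 ω 0 = sInf {m | (ω m).2 = s0} := rfl
    have hmem := Nat.sInf_mem hne
    refine ⟨by rw [heq]; exact hmem, ?_⟩
    unfold cardBelow
    rw [Finset.card_eq_zero, Finset.filter_eq_empty_iff]
    intro m hm
    rw [Finset.mem_range, heq] at hm
    exact Nat.notMem_of_lt_sInf hm
  | succ n ih =>
    obtain ⟨hvis, hcard⟩ := ih
    set t := tauSeq s0 ω n with ht
    have hne : {m | t < m ∧ (ω m).2 = s0}.Nonempty := by
      obtain ⟨m, hm1, hm2⟩ := hG t
      exact ⟨m, hm1, hm2⟩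
    have heq : tauSeq s0 ω (n + 1) = sInf {m | t < m ∧ (ω m).2 = s0} := rfl
    have hmem := Nat.sInf_mem hne
    rw [← heq] at hmem
    refine ⟨hmem.2, ?_⟩
    unfold cardBelow
    have hset : (Finset.range (tauSeq s0 ω (n + 1))).filter (fun m => (ω m).2 = s0)
        = insert t ((Finset.range t).filter (fun m => (ω m).2 = s0)) := by
      ext m
      simp only [Finset.mem_filter, Finset.mem_range, Finset.mem_insert]
      constructor
      · rintro ⟨hm1, hm2⟩
        rcases lt_trichotomy m t with h | h | h
        · right; exact ⟨h, hm2⟩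
        · left; exact h
        · exfalso
          rw [heq] at hm1
          exact Nat.notMem_of_lt_sInf hm1 ⟨h, hm2⟩
      · rintro (h | ⟨h1, h2⟩)
        · subst h; exact ⟨hmem.1, hvis⟩
        · have : m < tauSeq s0 ω (n + 1) := lt_trans h1 hmem.1
          exact ⟨this, h2⟩
    rw [hset, Finset.card_insert_of_notMem (by
      rw [Finset.mem_filter, Finset.mem_range]
      exact fun h => absurd h.1 (lt_irrefl t))]
    unfold cardBelow at hcard
    omega

lemma tau_eq_of_Bnt (s0 : S) (ω : ℕ → ℕ × S) (hG : ω ∈ Gset s0) (n t : ℕ)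
    (hB : ω ∈ Bnt s0 n t) : tauSeq s0 ω n = t := by
  by_contra hne
  exact Set.disjoint_left.mp (Bnt_disj s0 n _ _ hne) (tau_spec s0 ω hG n) hB

theorem stmt9_core (X : MChain (ℕ × S))
    (hirr : ∀ z w : ℕ × S, ∃ n : ℕ, X.P z {ω | ω n = w} ≠ 0) (s0 : S)
    (p : ℝ) (hp : 1 < p) (hB : CondB' X p) (Q : S → S → ℝ)
    (hql : ∀ i j, Filter.Tendsto (fun x : ℕ => (X.P (x, i) {ω | (ω 1).2 = j}).toReal)
      Filter.atTop (nhds (Q i j)))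
    (hQs : IsStochasticMatrix' Q)
    (hQi : ∀ i j, ∃ n : ℕ, 0 < ((Matrix.of Q) ^ n) i j) :
    ∃ (cr C : ℝ), 0 < cr ∧ 0 ≤ C ∧
      (∀ (z : ℕ × S) (n x r : ℕ),
        X.P z ({ω | r < tauSeq s0 ω (n + 1) - tauSeq s0 ω n}
            ∩ {ω | (ω (tauSeq s0 ω n)).1 = x})
          ≤ ENNReal.ofReal (C * Real.exp (-cr * r)) *
              X.P z {ω | (ω (tauSeq s0 ω n)).1 = x}) ∧
      (∀ (x : ℕ) (i : S) (r : ℕ),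
        X.P (x, i) {ω | ∀ n, 1 ≤ n → n ≤ r → (ω n).2 ≠ s0}
          ≤ ENNReal.ofReal (C * Real.exp (-cr * r))) := by
  obtain ⟨k, ε, hk, hε0, hε1, hhit⟩ := uniform_hit X hirr s0 p hp hB Q hql hQs hQi
  obtain ⟨cr, C, hcr, hC0, htail⟩ := noVis_tail X s0 k hk ε hε0 hε1 hhit
  refine ⟨cr, C, hcr, hC0, ?_, fun x i r => htail (x, i) r⟩
  intro z n x r
  set b : ℝ≥0∞ := ENNReal.ofReal (C * Real.exp (-cr * r)) with hbdef
  have hGnull := Gset_null X s0 cr C hcr htail z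
  set Dt : ℕ → Set (ℕ → ℕ × S) :=
    fun t => Bnt s0 n t ∩ {ω | ω t ∈ {w : ℕ × S | w.1 = x}} with hDt
  have hDmeas : ∀ t, MeasurableSet (Dt t) := fun t =>
    (Bnt_meas s0 n t).inter (meas_coord t MeasurableSet.of_discrete)
  have hDdisj : Pairwise (Function.onFun Disjoint Dt) := fun t t' h =>
    (Bnt_disj s0 n t t' h).mono Set.inter_subset_left Set.inter_subset_left
  -- Claim 1 : decomposition of the left event
  have claim1 : {ω : ℕ → ℕ × S | r < tauSeq s0 ω (n + 1) - tauSeq s0 ω n}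
        ∩ {ω | (ω (tauSeq s0 ω n)).1 = x}
      ⊆ (Gset s0)ᶜ ∪ ⋃ t : ℕ, (Dt t ∩ {ω | (fun m => ω (t + m)) ∈ noVis s0 r}) := by
    rintro ω ⟨hω1, hω2⟩
    by_cases hG : ω ∈ Gset s0
    · right
      refine Set.mem_iUnion.mpr ⟨tauSeq s0 ω n, ⟨⟨tau_spec s0 ω hG n, hω2⟩, ?_⟩⟩
      set t := tauSeq s0 ω n with ht
      have hne : {m | t < m ∧ (ω m).2 = s0}.Nonempty := by
        obtain ⟨m, hm1, hm2⟩ := hG t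
        exact ⟨m, hm1, hm2⟩
      have heq : tauSeq s0 ω (n + 1) = sInf {m | t < m ∧ (ω m).2 = s0} := rfl
      have hmem := Nat.sInf_mem hne
      rw [← heq] at hmem
      have hlt : t < tauSeq s0 ω (n + 1) := hmem.1
      have hω1' : r < tauSeq s0 ω (n + 1) - t := hω1
      intro m h1 h2 hc
      have hmlt : t + m < tauSeq s0 ω (n + 1) := by omega
      rw [heq] at hmlt
      exact Nat.notMem_of_lt_sInf hmlt ⟨by omega, hc⟩
    · left; exact hG
  -- Claim 2 : reassembly of the union into the conditioning event
  have claim2 : (⋃ t : ℕ, Dt t)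
      ⊆ {ω : ℕ → ℕ × S | (ω (tauSeq s0 ω n)).1 = x} ∪ (Gset s0)ᶜ := by
    intro ω hω
    obtain ⟨t, hB', hx⟩ := Set.mem_iUnion.mp hω
    by_cases hG : ω ∈ Gset s0
    · left
      have := tau_eq_of_Bnt s0 ω hG n t hB'
      rw [Set.mem_setOf_eq, this]
      exact hx
    · right; exact hG
  haveI := X.isProb z
  calc X.P z ({ω | r < tauSeq s0 ω (n + 1) - tauSeq s0 ω n}
          ∩ {ω | (ω (tauSeq s0 ω n)).1 = x})
      ≤ X.P z ((Gset s0)ᶜ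
          ∪ ⋃ t : ℕ, (Dt t ∩ {ω | (fun m => ω (t + m)) ∈ noVis s0 r})) :=
        measure_mono claim1
    _ ≤ X.P z (Gset s0)ᶜ
          + X.P z (⋃ t : ℕ, (Dt t ∩ {ω | (fun m => ω (t + m)) ∈ noVis s0 r})) :=
        measure_union_le _ _
    _ = X.P z (⋃ t : ℕ, (Dt t ∩ {ω | (fun m => ω (t + m)) ∈ noVis s0 r})) := by
        rw [hGnull, zero_add]
    _ ≤ ∑' t : ℕ, X.P z (Dt t ∩ {ω | (fun m => ω (t + m)) ∈ noVis s0 r}) :=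
        measure_iUnion_le _
    _ ≤ ∑' t : ℕ, b * X.P z (Dt t) := by
        refine Summable.tsum_le_tsum (fun t => ?_) ENNReal.summable ENNReal.summable
        exact X.shift_bound z t {w : ℕ × S | w.1 = x} (Bnt s0 n t) (noVis s0 r)
          (noVis_meas s0 r) (Bnt_det s0 n t) b (fun w _ => htail w r)
    _ = b * ∑' t : ℕ, X.P z (Dt t) := ENNReal.tsum_mul_left
    _ = b * X.P z (⋃ t : ℕ, Dt t) := by rw [measure_iUnion hDdisj hDmeas]
    _ ≤ b * X.P z {ω : ℕ → ℕ × S | (ω (tauSeq s0 ω n)).1 = x} := by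
        refine mul_le_mul_right ?_ _
        calc X.P z (⋃ t : ℕ, Dt t)
            ≤ X.P z ({ω : ℕ → ℕ × S | (ω (tauSeq s0 ω n)).1 = x} ∪ (Gset s0)ᶜ) :=
              measure_mono claim2
          _ ≤ X.P z {ω : ℕ → ℕ × S | (ω (tauSeq s0 ω n)).1 = x}
              + X.P z (Gset s0)ᶜ := measure_union_le _ _
          _ = X.P z {ω : ℕ → ℕ × S | (ω (tauSeq s0 ω n)).1 = x} := by
              rw [hGnull, add_zero]

end TauPart



/-- `Fdist a t` is the distribution function of the square root of a `Gamma(a,t)` random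
variable: `F_{a,t}(x) = ∫_0^x 2 u^{2a-1} e^{-u²/t} / (t^a Γ(a)) du`. -/
noncomputable def Fdist (a t x : ℝ) : ℝ :=
  ∫ u in (0:ℝ)..x, 2 * u ^ (2 * a - 1) * Real.exp (-(u ^ 2) / t) / (t ^ a * Real.Gamma a)

variable {S : Type*} [Fintype S] [DecidableEq S] [Nonempty S]
  [MeasurableSpace S] [MeasurableSingletonClass S]

/-- Lemma (excursion duration tails): under (B_p) for some `p > 1` and (Q_∞), the excursion
durations `τ_{n+1} − τ_n`, conditionally on `X_{τ_n} = x`, have uniformly exponential tails;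
moreover `P_{x,i}[τ > r] ≤ C e^{−cr}` uniformly in `x` and `i`. -/
theorem stmt9 (X : MChain (ℕ × S)) (hirr : X.Irreducible) (s0 : S)
    (p : ℝ) (hp : 1 < p) (hB : CondB X p)
    (Q : S → S → ℝ) (pst : S → ℝ) (hQ : CondQ X Q) (hpst : IsStationaryDist Q pst) :
    ∃ (cr C : ℝ), 0 < cr ∧ 0 ≤ C ∧
      (∀ (z : ℕ × S) (n x r : ℕ),
        X.P z ({ω | r < tauSeq s0 ω (n + 1) - tauSeq s0 ω n}
            ∩ {ω | (ω (tauSeq s0 ω n)).1 = x})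
          ≤ ENNReal.ofReal (C * Real.exp (-cr * r)) *
              X.P z {ω | (ω (tauSeq s0 ω n)).1 = x}) ∧
      (∀ (x : ℕ) (i : S) (r : ℕ),
        X.P (x, i) {ω | ∀ n, 1 ≤ n → n ≤ r → (ω n).2 ≠ s0}
          ≤ ENNReal.ofReal (C * Real.exp (-cr * r))) := by
  have hB' : CondB' X p := hB
  have hQs' : IsStochasticMatrix' Q := hQ.2.1
  have hql : ∀ i j, Tendsto (fun x : ℕ => (X.P (x, i) {ω | (ω 1).2 = j}).toReal)
      atTop (nhds (Q i j)) := fun i j => hQ.1 i j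
  exact stmt9_core X hirr s0 p hp hB' Q hql hQs' hQ.2.2
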